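/- Let A be an n×n X-matrix with real entries and let λ ∈ ℂ be an eigenvalue of A (a root of its characteristic polynomial over ℂ). Then either n is odd and λ = a_{(n+1)/2,(n+1)/2}, or there exists an index i with 1 ≤ i ≤ ⌊n/2⌋ such that λ lies on the boundary of the corresponding Cassini oval: |λ − a_{i,i}| · |λ − a_{n−i+1,n−i+1}| = |a_{i,n−i+1} a_{n−i+1,i}|. -/

import Mathlib

open Matrix Polynomial

/-- An `n × n` matrix is an X-matrix if every entry off the diagonal and off the
anti-diagonal (1-based: `i ≠ j` and `i + j ≠ n + 1`) vanishes. -/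
def IsXMatrix {n : ℕ} (A : Matrix (Fin n) (Fin n) ℝ) : Prop :=
  ∀ i j : Fin n, i ≠ j → j ≠ i.rev → A i j = 0

/-- The inclusion of the first half of the indices, `Fin (n / 2) → Fin n`
(1-based: `i = 1, …, ⌊n/2⌋`). -/
def lowEmb (n : ℕ) : Fin (n / 2) → Fin n := Fin.castLE (Nat.div_le_self n 2)

/-- Every complex eigenvalue `λ` of a real X-matrix either equals the central entry
(`n` odd), or lies on the boundary of a Cassini oval:
`|λ - a_{i,i}| ⬝ |λ - a_{n-i+1,n-i+1}| = |a_{i,n-i+1} a_{n-i+1,i}|` for some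
`1 ≤ i ≤ ⌊n/2⌋`. -/
theorem xMatrix_eigenvalue_on_cassini_boundary {n : ℕ}
    (A : Matrix (Fin n) (Fin n) ℝ) (hA : IsXMatrix A) (lam : ℂ)
    (hlam : (A.charpoly.map (algebraMap ℝ ℂ)).IsRoot lam) :
    (∃ h : Odd n, lam = ((A ⟨n / 2, by rcases h with ⟨k, rfl⟩; omega⟩
        ⟨n / 2, by rcases h with ⟨k, rfl⟩; omega⟩ : ℝ) : ℂ)) ∨
    (∃ i : Fin (n / 2),
      ‖lam - ((A (lowEmb n i) (lowEmb n i) : ℝ) : ℂ)‖ *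
        ‖lam - ((A (lowEmb n i).rev (lowEmb n i).rev : ℝ) : ℂ)‖ =
      |A (lowEmb n i) (lowEmb n i).rev * A (lowEmb n i).rev (lowEmb n i)|) := by
  classical
  set B : Matrix (Fin n) (Fin n) ℂ := A.map (algebraMap ℝ ℂ) with hBdef
  have hdet : ((charmatrix B).map (eval lam)).det = 0 := by
    have h1 : B.charpoly = A.charpoly.map (algebraMap ℝ ℂ) :=
      Matrix.charpoly_map A (algebraMap ℝ ℂ)
    have h2 : eval lam B.charpoly = 0 := by rw [h1]; exact hlam
    have h3 := (Polynomial.evalRingHom lam).map_det (charmatrix B)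
    simpa [Matrix.charpoly] using h3.symm.trans h2
  obtain ⟨v, hv0, hmv⟩ := (Matrix.exists_mulVec_eq_zero_iff).mpr hdet
  have hM : ∀ i j : Fin n, ((charmatrix B).map (eval lam)) i j
      = (if i = j then lam else 0) - ((A i j : ℝ) : ℂ) := by
    intro i j
    by_cases h : i = j
    · subst h
      simp [Matrix.map_apply, charmatrix_apply_eq, hBdef]
    · simp [Matrix.map_apply, charmatrix_apply_ne _ _ _ h, h, hBdef]
  have key : ∀ i : Fin n, lam * v i = ∑ j, ((A i j : ℝ) : ℂ) * v j := by
    intro i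
    have h0 := congrFun hmv i
    simp only [Matrix.mulVec, dotProduct, Pi.zero_apply, hM] at h0
    have h5 : ∑ j, (if i = j then lam else 0) * v j = lam * v i := by
      rw [Finset.sum_eq_single i] <;> simp +contextual [eq_comm]
    have h4 : ∑ j, ((if i = j then lam else 0) * v j - ((A i j : ℝ) : ℂ) * v j) = 0 := by
      simpa [sub_mul] using h0
    rw [Finset.sum_sub_distrib, h5] at h4
    linear_combination h4
  obtain ⟨i, hvi⟩ := Function.ne_iff.mp hv0
  simp only [Pi.zero_apply] at hvi
  have hrevsum : ∀ k : Fin n, (k.rev : ℕ) = n - 1 - k := by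
    intro k; simp [Fin.rev]; omega
  by_cases hc : i = i.rev
  · left
    have h2i : 2 * (i : ℕ) = n - 1 := by
      have := congrArg Fin.val hc
      have hr := hrevsum i
      have := i.isLt
      omega
    have hodd : Odd n := ⟨(i : ℕ), by have := i.isLt; omega⟩
    refine ⟨hodd, ?_⟩
    have hidx : i = (⟨n / 2, by rcases hodd with ⟨k, rfl⟩; omega⟩ : Fin n) := by
      apply Fin.ext; simp; omega
    have hk := key i
    have hsum : ∑ j, ((A i j : ℝ) : ℂ) * v j = ((A i i : ℝ) : ℂ) * v i := by
      rw [Finset.sum_eq_single i]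
      · intro j _ hj
        rw [hA i j (Ne.symm hj) (by rw [← hc]; exact hj)]; simp
      · simp
    rw [hsum] at hk
    have hz : (lam - ((A i i : ℝ) : ℂ)) * v i = 0 := by linear_combination hk
    rcases mul_eq_zero.mp hz with h | h
    · rw [← hidx]; exact sub_eq_zero.mp h
    · exact absurd h hvi
  · right
    set j := i.rev with hj
    have hji : j.rev = i := Fin.rev_rev i
    have pairsum : ∀ k : Fin n, k ≠ k.rev →
        ∑ m, ((A k m : ℝ) : ℂ) * v m
          = ((A k k : ℝ) : ℂ) * v k + ((A k k.rev : ℝ) : ℂ) * v k.rev := by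
      intro k hk
      rw [← Finset.sum_subset (Finset.subset_univ ({k, k.rev} : Finset (Fin n)))]
      · rw [Finset.sum_pair hk]
      · intro x _ hx
        simp only [Finset.mem_insert, Finset.mem_singleton, not_or] at hx
        rw [hA k x (Ne.symm hx.1) hx.2]; simp
    have e1 : (lam - ((A i i : ℝ) : ℂ)) * v i = ((A i j : ℝ) : ℂ) * v j := by
      have h := (key i).trans (pairsum i hc)
      rw [← hj] at h; linear_combination h
    have e2 : (lam - ((A j j : ℝ) : ℂ)) * v j = ((A j i : ℝ) : ℂ) * v i := by
      have hcj : j ≠ j.rev := by rw [hji]; exact fun h => hc (h.symm.trans hj)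
      have h := (key j).trans (pairsum j hcj)
      rw [hji] at h; linear_combination h
    have main : ‖lam - ((A i i : ℝ) : ℂ)‖ *
        ‖lam - ((A j j : ℝ) : ℂ)‖ = |A i j * A j i| := by
      by_cases hvj : v j = 0
      · have h1 : lam - ((A i i : ℝ) : ℂ) = 0 := by
          have hz : (lam - ((A i i : ℝ) : ℂ)) * v i = 0 := by rw [e1, hvj, mul_zero]
          rcases mul_eq_zero.mp hz with h | h
          · exact h
          · exact absurd h hvi
        have h2 : ((A j i : ℝ) : ℂ) = 0 := by
          have hz : ((A j i : ℝ) : ℂ) * v i = 0 := by rw [← e2, hvj, mul_zero]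
          rcases mul_eq_zero.mp hz with h | h
          · exact h
          · exact absurd h hvi
        have h2' : A j i = 0 := by exact_mod_cast h2
        rw [h1, h2', mul_zero, abs_zero, norm_zero, zero_mul]
      · have hmul : (lam - ((A i i : ℝ) : ℂ)) * (lam - ((A j j : ℝ) : ℂ))
            = ((A i j : ℝ) : ℂ) * ((A j i : ℝ) : ℂ) := by
          have hz : ((lam - ((A i i : ℝ) : ℂ)) * (lam - ((A j j : ℝ) : ℂ))
              - ((A i j : ℝ) : ℂ) * ((A j i : ℝ) : ℂ)) * (v i * v j) = 0 := by
            linear_combination ((lam - ((A j j : ℝ) : ℂ)) * v j) * e1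
              + (((A i j : ℝ) : ℂ) * v j) * e2
          rcases mul_eq_zero.mp hz with h' | h'
          · linear_combination h'
          · exact absurd h' (mul_ne_zero hvi hvj)
        calc ‖lam - ((A i i : ℝ) : ℂ)‖ *
              ‖lam - ((A j j : ℝ) : ℂ)‖
            = ‖(lam - ((A i i : ℝ) : ℂ)) * (lam - ((A j j : ℝ) : ℂ))‖ :=
              (norm_mul _ _).symm
          _ = ‖((A i j * A j i : ℝ) : ℂ)‖ := by rw [hmul]; push_cast; ring_nf
          _ = |A i j * A j i| := by rw [Complex.norm_real, Real.norm_eq_abs]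
    have hvalsum : (i : ℕ) + (j : ℕ) = n - 1 := by
      have := hrevsum i; have := i.isLt; rw [hj]; omega
    have hne : (i : ℕ) ≠ (j : ℕ) := fun h => hc (by rw [hj] at h ⊢; exact Fin.ext h)
    by_cases hlow : (i : ℕ) < n / 2
    · refine ⟨⟨(i : ℕ), hlow⟩, ?_⟩
      have hE : lowEmb n ⟨(i : ℕ), hlow⟩ = i := rfl
      rw [hE, ← hj]
      exact main
    · have hlow' : (j : ℕ) < n / 2 := by have := i.isLt; omega
      refine ⟨⟨(j : ℕ), hlow'⟩, ?_⟩
      have hE : lowEmb n ⟨(j : ℕ), hlow'⟩ = j := rfl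
      rw [hE, hji, mul_comm (A j i)]
      linear_combination main
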